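/- Categorical products in Dir agree with the algebraic product of Dirichlet polynomials: for finite coproducts of representable presheaves D = ∐_{i ∈ I} Fin(–, dᵢ) and E = ∐_{j ∈ J} Fin(–, eⱼ), the product D × E in the functor category FintypeCatᵒᵖ ⥤ FintypeCat is isomorphic to ∐_{(i,j) ∈ I × J} Fin(–, dᵢ × eⱼ); in particular the product of two Dirichlet functors is again a Dirichlet functor. -/

import Mathlib

/- STATEMENT 16: Categorical products in `Dir` agree with the algebraic product of Dirichlet
polynomials: for `D = ∐_{i ∈ I} Fin(–, dᵢ)` and `E = ∐_{j ∈ J} Fin(–, eⱼ)`, the product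
`D × E` in the functor category `FintypeCatᵒᵖ ⥤ FintypeCat` is isomorphic to
`∐_{(i,j) ∈ I × J} Fin(–, dᵢ × eⱼ)`; in particular the product of two Dirichlet functors is
again a Dirichlet functor. -/

open CategoryTheory CategoryTheory.Limits Opposite

noncomputable section

noncomputable instance (X Y : FintypeCat.{0}) : Fintype (X ⟶ Y) := by
  classical exact (Fintype.ofFinite (X ⟶ Y))

/-- The finite coproduct `∐ᵢ Fin(–, dᵢ)` of representable presheaves `FintypeCatᵒᵖ ⥤ FintypeCat`. -/
def dirichletSum {I : Type} [Fintype I] (d : I → FintypeCat.{0}) :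
    FintypeCat.{0}ᵒᵖ ⥤ FintypeCat.{0} where
  obj X := FintypeCat.of (Σ i, (X.unop ⟶ d i))
  map f := FintypeCat.homMk (fun x => ⟨x.1, f.unop ≫ x.2⟩)

/-- A Dirichlet functor is a finite coproduct of representable presheaves. -/
def IsDirichlet (D : FintypeCat.{0}ᵒᵖ ⥤ FintypeCat.{0}) : Prop :=
  ∃ (I : Type) (_ : Fintype I) (d : I → FintypeCat.{0}), Nonempty (D ≅ dirichletSum d)

section Aux

variable {I J : Type} [Fintype I] [Fintype J] (d : I → FintypeCat.{0}) (e : J → FintypeCat.{0})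

/-- First projection. -/
def dirP : dirichletSum (fun ij : I × J => FintypeCat.of (d ij.1 × e ij.2)) ⟶ dirichletSum d where
  app X := FintypeCat.homMk (fun x => ⟨x.1.1, FintypeCat.homMk (fun y => (x.2 y).1)⟩)

/-- Second projection. -/
def dirQ : dirichletSum (fun ij : I × J => FintypeCat.of (d ij.1 × e ij.2)) ⟶ dirichletSum e where
  app X := FintypeCat.homMk (fun x => ⟨x.1.2, FintypeCat.homMk (fun y => (x.2 y).2)⟩)

/-- The lift. -/
def dirLift (s : BinaryFan (dirichletSum d) (dirichletSum e)) :
    s.pt ⟶ dirichletSum (fun ij : I × J => FintypeCat.of (d ij.1 × e ij.2)) where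
  app X := FintypeCat.homMk (fun x =>
    ⟨((s.fst.app X x).1, (s.snd.app X x).1),
      FintypeCat.homMk (fun y => ((s.fst.app X x).2 y, (s.snd.app X x).2 y))⟩)
  naturality X Y f := by
    ext x
    have hf : s.fst.app Y (s.pt.map f x) = (dirichletSum d).map f (s.fst.app X x) :=
      ConcreteCategory.congr_hom (s.fst.naturality f) x
    have hs : s.snd.app Y (s.pt.map f x) = (dirichletSum e).map f (s.snd.app X x) :=
      ConcreteCategory.congr_hom (s.snd.naturality f) x
    have key : ∀ (a a' : (dirichletSum d).obj Y) (b b' : (dirichletSum e).obj Y), a = a' → b = b' →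
        (⟨(a.1, b.1), FintypeCat.homMk (fun y => (a.2 y, b.2 y))⟩ :
          (dirichletSum (fun ij : I × J => FintypeCat.of (d ij.1 × e ij.2))).obj Y) =
        ⟨(a'.1, b'.1), FintypeCat.homMk (fun y => (a'.2 y, b'.2 y))⟩ := by
      rintro a _ b _ rfl rfl
      rfl
    exact key _ _ _ _ hf hs

/-- The fan is a limit. -/
def dirIsLimit : IsLimit (BinaryFan.mk (dirP d e) (dirQ d e)) := by
  refine BinaryFan.isLimitMk (dirLift d e)
    (fun s => ?_) (fun s => ?_) (fun s m h1 h2 => ?_)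
  · rfl
  · rfl
  · ext X x
    have h1' := ConcreteCategory.congr_hom (congrArg (fun t => t.app X) h1) x
    have h2' := ConcreteCategory.congr_hom (congrArg (fun t => t.app X) h2) x
    simp only [NatTrans.comp_app, FintypeCat.comp_apply] at h1' h2'
    have key : ∀ (z : (dirichletSum (fun ij : I × J => FintypeCat.of (d ij.1 × e ij.2))).obj X)
        (a : (dirichletSum d).obj X) (b : (dirichletSum e).obj X),
        (dirP d e).app X z = a → (dirQ d e).app X z = b →
        z = ⟨(a.1, b.1), FintypeCat.homMk (fun y => (a.2 y, b.2 y))⟩ := by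
      rintro ⟨⟨i, j⟩, g⟩ _ _ rfl rfl
      rfl
    exact key _ _ _ h1' h2'

end Aux

theorem dirichlet_products
    {I J : Type} [Fintype I] [Fintype J] (d : I → FintypeCat.{0}) (e : J → FintypeCat.{0}) :
    Nonempty
      (dirichletSum d ⨯ dirichletSum e ≅
        dirichletSum (fun ij : I × J => FintypeCat.of (d ij.1 × e ij.2))) ∧
    ∀ (D E : FintypeCat.{0}ᵒᵖ ⥤ FintypeCat.{0}),
      IsDirichlet D → IsDirichlet E → IsDirichlet (D ⨯ E) := by
  constructor
  · exact ⟨limit.isoLimitCone ⟨_, dirIsLimit d e⟩⟩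
  · rintro D E ⟨I', _, d', ⟨φ⟩⟩ ⟨J', _, e', ⟨ψ⟩⟩
    exact ⟨I' × J', inferInstance, fun ij => FintypeCat.of (d' ij.1 × e' ij.2),
      ⟨(HasLimit.isoOfNatIso (mapPairIso φ ψ)).trans
        (limit.isoLimitCone ⟨_, dirIsLimit d' e'⟩)⟩⟩
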